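/- arXiv:1606.07752 — 2 statements merged into one kernel-verified Lean document; each statement's English description precedes it below -/
import Mathlib

section
/- Let ν > 0, T > 0, a ∈ (0,1), ε ∈ (0,1), and let u_ε(t,x) = A/((t+ε)(a−x+ε)) for (t,x) ∈ [0,T] × [0,a], where A > 0 is a constant. Then ∂ₜu_ε − ν ∂ₓ²u_ε + u_ε ∂ₓu_ε = A·(−(a−x+ε)² − 2ν(t+ε) + A)/((t+ε)²(a−x+ε)³) for all (t,x) ∈ [0,T] × [0,a]. Moreover, if A ≥ 4ν(T+1) + 2(a+1)², then ∂ₜu_ε − ν ∂ₓ²u_ε + u_ε ∂ₓu_ε ≥ A²/(2(T+1)²(a+1)³). -/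
/-- Supersolution computation from Section 4.4: for
`u_ε(t,x) = A/((t+ε)(a−x+ε))` on `[0,T] × [0,a]`, the exact identity
for `∂ₜu_ε − ν ∂ₓ²u_ε + u_ε ∂ₓu_ε`, and the lower bound when
`A ≥ 4ν(T+1) + 2(a+1)²`. -/
theorem stmt_1 (ν T a ε A : ℝ) (hν : 0 < ν) (hT : 0 < T)
    (ha : a ∈ Set.Ioo (0 : ℝ) 1) (hε : ε ∈ Set.Ioo (0 : ℝ) 1) (hA : 0 < A)
    (u : ℝ → ℝ → ℝ)
    (hu : ∀ t x, u t x = A / ((t + ε) * (a - x + ε))) :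
    (∀ t ∈ Set.Icc (0 : ℝ) T, ∀ x ∈ Set.Icc (0 : ℝ) a,
      deriv (fun s => u s x) t - ν * deriv (deriv (fun y => u t y)) x
        + u t x * deriv (fun y => u t y) x
        = A * (-(a - x + ε) ^ 2 - 2 * ν * (t + ε) + A)
            / ((t + ε) ^ 2 * (a - x + ε) ^ 3)) ∧
    (4 * ν * (T + 1) + 2 * (a + 1) ^ 2 ≤ A →
      ∀ t ∈ Set.Icc (0 : ℝ) T, ∀ x ∈ Set.Icc (0 : ℝ) a,
        deriv (fun s => u s x) t - ν * deriv (deriv (fun y => u t y)) x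
          + u t x * deriv (fun y => u t y) x
          ≥ A ^ 2 / (2 * (T + 1) ^ 2 * (a + 1) ^ 3)) := by
  obtain ⟨hε0, hε1⟩ := hε
  obtain ⟨ha0, ha1⟩ := ha
  have key : ∀ t ∈ Set.Icc (0 : ℝ) T, ∀ x ∈ Set.Icc (0 : ℝ) a,
      deriv (fun s => u s x) t - ν * deriv (deriv (fun y => u t y)) x
        + u t x * deriv (fun y => u t y) x
        = A * (-(a - x + ε) ^ 2 - 2 * ν * (t + ε) + A)
            / ((t + ε) ^ 2 * (a - x + ε) ^ 3) := by
    intro t ht x hx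
    have htε : 0 < t + ε := by linarith [ht.1]
    have hg : 0 < a - x + ε := by linarith [hx.2]
    -- time derivative
    have hdt : deriv (fun s => u s x) t = -A / ((t + ε) ^ 2 * (a - x + ε)) := by
      have hfun : (fun s => u s x) = fun s => (A / (a - x + ε)) * (s + ε)⁻¹ := by
        funext s; rw [hu, div_eq_mul_inv, mul_inv]; ring
      rw [hfun]
      have h1 : HasDerivAt (fun s : ℝ => s + ε) 1 t := (hasDerivAt_id t).add_const ε
      have h2 := (h1.inv htε.ne').const_mul (A / (a - x + ε))
      erw [h2.deriv]
      field_simp [htε.ne', hg.ne']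
    -- spatial derivative (at any point below a + ε)
    have hdx : ∀ y : ℝ, a - y + ε ≠ 0 →
        HasDerivAt (fun y => u t y) (A / ((t + ε) * (a - y + ε) ^ 2)) y := by
      intro y hy
      have hfun : (fun y => u t y) = fun y => (A / (t + ε)) * (a - y + ε)⁻¹ := by
        funext z; rw [hu, div_eq_mul_inv, mul_inv]; ring
      rw [hfun]
      have h1 : HasDerivAt (fun y : ℝ => a - y + ε) (-1) y :=
        ((hasDerivAt_id y).const_sub a).add_const ε
      have h2 := (h1.inv hy).const_mul (A / (t + ε))
      exact h2.congr_deriv (by rw [neg_neg, mul_one_div, div_div])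
    have hderiv1 : deriv (fun y => u t y) x = A / ((t + ε) * (a - x + ε) ^ 2) :=
      (hdx x hg.ne').deriv
    -- second spatial derivative
    have hev : deriv (fun y => u t y) =ᶠ[nhds x]
        fun y => (A / (t + ε)) * ((a - y + ε) ^ 2)⁻¹ := by
      filter_upwards [Iio_mem_nhds (show x < a + ε by linarith)] with y hy
      have hy' : (0:ℝ) < a - y + ε := by
        have : y < a + ε := hy
        linarith
      rw [(hdx y hy'.ne').deriv]
      field_simp
    have hdxx : deriv (deriv (fun y => u t y)) x
        = 2 * A / ((t + ε) * (a - x + ε) ^ 3) := by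
      rw [hev.deriv_eq]
      have h1 : HasDerivAt (fun y : ℝ => a - y + ε) (-1) x :=
        ((hasDerivAt_id x).const_sub a).add_const ε
      have h2 : HasDerivAt (fun y : ℝ => (a - y + ε) ^ 2)
          (2 * (a - x + ε) ^ 1 * (-1)) x := h1.pow 2
      have h3 := (h2.inv (by positivity : ((a - x + ε) ^ 2 : ℝ) ≠ 0)).const_mul (A / (t + ε))
      erw [h3.deriv]
      field_simp
    rw [hdt, hdxx, hderiv1, hu]
    field_simp
  refine ⟨key, ?_⟩
  intro hA' t ht x hx
  rw [key t ht x hx]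
  have htε : 0 < t + ε := by linarith [ht.1]
  have hg : 0 < a - x + ε := by linarith [hx.2]
  have htε' : t + ε ≤ T + 1 := by linarith [ht.2]
  have hg' : a - x + ε ≤ a + 1 := by linarith [hx.1]
  have hN : A / 2 ≤ -(a - x + ε) ^ 2 - 2 * ν * (t + ε) + A := by
    nlinarith [mul_nonneg (by linarith : (0:ℝ) ≤ a + 1 - (a - x + ε))
      (by linarith : (0:ℝ) ≤ a + 1 + (a - x + ε)), hν.le]
  have hT1 : (0:ℝ) < T + 1 := by linarith
  have ha1' : (0:ℝ) < a + 1 := by linarith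
  calc A ^ 2 / (2 * (T + 1) ^ 2 * (a + 1) ^ 3)
      = A * (A / 2) / ((T + 1) ^ 2 * (a + 1) ^ 3) := by
        field_simp
    _ ≤ A * (-(a - x + ε) ^ 2 - 2 * ν * (t + ε) + A)
          / ((t + ε) ^ 2 * (a - x + ε) ^ 3) := by
        apply div_le_div₀ (by nlinarith) (mul_le_mul_of_nonneg_left hN hA.le) (by positivity)
        exact mul_le_mul (pow_le_pow_left₀ htε.le htε' 2)
          (pow_le_pow_left₀ hg.le hg' 3) (by positivity) (by positivity)
end

section
/- Let ν > 0, T > 0, a ∈ (0,1), A > 0 satisfy A² ≥ 2(T+1)²(a+1)³·M and A ≥ 4ν(T+1) + 2(a+1)², where M ≥ 0. Then for every ε ∈ (0,1), the function u_ε(t,x) = A/((t+ε)(a−x+ε)) satisfies ∂ₜu_ε − ν∂ₓ²u_ε + u_ε ∂ₓu_ε ≥ M pointwise on [0,T] × [0,a]. -/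
set_option maxHeartbeats 1000000 in
/-- Section 4.4: under `A² ≥ 2(T+1)²(a+1)³ M` and `A ≥ 4ν(T+1) + 2(a+1)²`,
the function `u_ε(t,x) = A/((t+ε)(a−x+ε))` satisfies
`∂ₜu_ε − ν ∂ₓ²u_ε + u_ε ∂ₓu_ε ≥ M` pointwise on `[0,T] × [0,a]`. -/
theorem stmt_2 (ν T a A M : ℝ) (hν : 0 < ν) (hT : 0 < T)
    (ha : a ∈ Set.Ioo (0 : ℝ) 1) (hA : 0 < A) (hM : 0 ≤ M)
    (hA1 : 2 * (T + 1) ^ 2 * (a + 1) ^ 3 * M ≤ A ^ 2)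
    (hA2 : 4 * ν * (T + 1) + 2 * (a + 1) ^ 2 ≤ A) :
    ∀ ε ∈ Set.Ioo (0 : ℝ) 1, ∀ u : ℝ → ℝ → ℝ,
      (∀ t x, u t x = A / ((t + ε) * (a - x + ε))) →
      ∀ t ∈ Set.Icc (0 : ℝ) T, ∀ x ∈ Set.Icc (0 : ℝ) a,
        deriv (fun s => u s x) t - ν * deriv (deriv (fun y => u t y)) x
          + u t x * deriv (fun y => u t y) x ≥ M := by
  rintro ε ⟨hε0, hε1⟩ u hu t ht x hx
  obtain ⟨ha0, ha1⟩ := ha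
  have hτ0 : 0 < t + ε := by linarith [ht.1]
  have hσ0 : 0 < a - x + ε := by linarith [hx.2]
  have hden : (t + ε) * (a - x + ε) ≠ 0 := by positivity
  -- time derivative
  have ht1 : deriv (fun s => u s x) t = -A / ((t + ε) ^ 2 * (a - x + ε)) := by
    have heq : (fun s => u s x) = fun s => A / ((s + ε) * (a - x + ε)) :=
      funext fun s => hu s x
    rw [heq]
    have hd : HasDerivAt (fun s : ℝ => (s + ε) * (a - x + ε)) (1 * (a - x + ε)) t :=
      ((hasDerivAt_id t).add_const ε).mul_const _
    rw [(show HasDerivAt (fun s => A / ((s + ε) * (a - x + ε))) _ t from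
      (hasDerivAt_const t A).div hd hden).deriv]
    field_simp
    ring
  -- first space derivative (as HasDerivAt at any good point)
  have hx1 : ∀ y : ℝ, a - y + ε ≠ 0 →
      HasDerivAt (fun z => u t z)
        ((0 * ((t + ε) * (a - y + ε)) - A * ((t + ε) * (-1))) / ((t + ε) * (a - y + ε)) ^ 2) y := by
    intro y hy
    have heq : (fun z => u t z) = fun z => A / ((t + ε) * (a - z + ε)) :=
      funext fun z => hu t z
    rw [heq]
    have hd : HasDerivAt (fun z : ℝ => (t + ε) * (a - z + ε)) ((t + ε) * (-1)) y :=
      (((hasDerivAt_id y).const_sub a).add_const ε).const_mul _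
    exact (hasDerivAt_const y A).div hd (mul_ne_zero (ne_of_gt hτ0) hy)
  have hx1' : deriv (fun y => u t y) x = A / ((t + ε) * (a - x + ε) ^ 2) := by
    rw [(hx1 x (ne_of_gt hσ0)).deriv]
    field_simp
    ring
  -- the first space derivative agrees with a nice formula near x
  have hev : (deriv fun y => u t y) =ᶠ[nhds x]
      fun y => A * (t + ε) / ((t + ε) * (a - y + ε)) ^ 2 := by
    filter_upwards [Iio_mem_nhds (show x < a + ε by linarith [hx.2])] with y hy
    have hy' : a - y + ε ≠ 0 := by
      have h1 : y < a + ε := hy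
      have h2 : 0 < a - y + ε := by linarith
      exact ne_of_gt h2
    rw [(hx1 y hy').deriv]
    ring
  -- second space derivative
  have hx2 : deriv (deriv fun y => u t y) x = 2 * A / ((t + ε) * (a - x + ε) ^ 3) := by
    rw [hev.deriv_eq]
    have hd : HasDerivAt (fun y : ℝ => (t + ε) * (a - y + ε)) ((t + ε) * (-1)) x :=
      (((hasDerivAt_id x).const_sub a).add_const ε).const_mul _
    have hd2 : HasDerivAt (fun y : ℝ => ((t + ε) * (a - y + ε)) ^ 2)
        ((2 : ℕ) * ((t + ε) * (a - x + ε)) ^ 1 * ((t + ε) * (-1))) x := hd.pow 2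
    rw [(show HasDerivAt (fun y => A * (t + ε) / ((t + ε) * (a - y + ε)) ^ 2) _ x from
      (hasDerivAt_const x (A * (t + ε))).div hd2 (pow_ne_zero 2 hden)).deriv]
    field_simp
    ring
  -- key inequality
  have hτle : t + ε ≤ T + 1 := by linarith [ht.2]
  have hσle : a - x + ε ≤ a + 1 := by linarith [hx.1]
  have hkey1 : (a - x + ε) ^ 2 + 2 * ν * (t + ε) ≤ A / 2 := by
    have h1 : (a - x + ε) ^ 2 ≤ (a + 1) ^ 2 := pow_le_pow_left₀ hσ0.le hσle 2
    nlinarith [mul_le_mul_of_nonneg_left hτle (by linarith : (0:ℝ) ≤ 2 * ν)]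
  have hp : (t + ε) ^ 2 * (a - x + ε) ^ 3 ≤ (T + 1) ^ 2 * (a + 1) ^ 3 :=
    mul_le_mul (pow_le_pow_left₀ hτ0.le hτle 2) (pow_le_pow_left₀ hσ0.le hσle 3)
      (by positivity) (by positivity)
  have hgoal : M ≤ A * (A - (a - x + ε) ^ 2 - 2 * ν * (t + ε))
      / ((t + ε) ^ 2 * (a - x + ε) ^ 3) := by
    rw [le_div_iff₀ (by positivity)]
    have hM2 : M * ((t + ε) ^ 2 * (a - x + ε) ^ 3) ≤ M * ((T + 1) ^ 2 * (a + 1) ^ 3) :=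
      mul_le_mul_of_nonneg_left hp hM
    have hM3 : M * ((T + 1) ^ 2 * (a + 1) ^ 3) ≤ A ^ 2 / 2 := by linarith
    have h5 : A ^ 2 / 2 ≤ A * (A - (a - x + ε) ^ 2 - 2 * ν * (t + ε)) := by
      nlinarith [mul_le_mul_of_nonneg_left hkey1 hA.le]
    linarith
  rw [ge_iff_le, ht1, hx2, hx1', hu t x]
  refine hgoal.trans (le_of_eq ?_)
  field_simp
  ring
end
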